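/- arXiv:2006.09871 — 2 statements merged into one kernel-verified Lean document; each statement's English description precedes it below -/
import Mathlib

section
/- Let X be a Banach space satisfying the metric π-property and let Y be a uniformly convex Banach space. Then NAπ(X ⊗π Y) is ‖·‖π-dense in X ⊗π Y. -/
noncomputable section

open scoped BigOperators

/-- The predicate stating that the Banach space `Z`, together with the bounded bilinear map
`t : X → Y → Z` and the correspondence `lift` between operators `X → Y*` and functionals on `Z`,
realizes the projective tensor product `X ⊗π Y`.  The field `norm_eq_sInf` says that the norm of
`Z` is the projective norm: `‖z‖π = inf {∑ₙ ‖xₙ‖‖yₙ‖ : z = ∑ₙ xₙ ⊗ yₙ}`, and the `lift` fields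
encode the canonical isometric identification `(X ⊗π Y)* = L(X, Y*)`. -/
structure IsProjTensorProduct (X Y Z : Type*)
    [NormedAddCommGroup X] [NormedSpace ℝ X]
    [NormedAddCommGroup Y] [NormedSpace ℝ Y]
    [NormedAddCommGroup Z] [NormedSpace ℝ Z]
    (t : X →L[ℝ] Y →L[ℝ] Z)
    (lift : (X →L[ℝ] (Y →L[ℝ] ℝ)) → (Z →L[ℝ] ℝ)) : Prop where
  norm_tmul_le : ∀ (x : X) (y : Y), ‖t x y‖ ≤ ‖x‖ * ‖y‖
  exists_rep : ∀ z : Z, ∃ (x : ℕ → X) (y : ℕ → Y),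
    Summable (fun n => ‖x n‖ * ‖y n‖) ∧ HasSum (fun n => t (x n) (y n)) z
  norm_eq_sInf : ∀ z : Z, ‖z‖ = sInf {r : ℝ | ∃ (x : ℕ → X) (y : ℕ → Y),
    Summable (fun n => ‖x n‖ * ‖y n‖) ∧ HasSum (fun n => t (x n) (y n)) z ∧
    r = ∑' n, ‖x n‖ * ‖y n‖}
  lift_tmul : ∀ (G : X →L[ℝ] (Y →L[ℝ] ℝ)) (x : X) (y : Y), lift G (t x y) = G x y
  norm_lift : ∀ G : X →L[ℝ] (Y →L[ℝ] ℝ), ‖lift G‖ = ‖G‖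
  lift_surjective : Function.Surjective lift

/-- An element `z ∈ X ⊗π Y` attains its projective norm if it admits a representation
`z = ∑ₙ xₙ ⊗ yₙ` with `∑ₙ ‖xₙ‖‖yₙ‖ < ∞` and `‖z‖π = ∑ₙ ‖xₙ‖‖yₙ‖`. -/
def AttainsProjNorm {X Y Z : Type*}
    [NormedAddCommGroup X] [NormedSpace ℝ X]
    [NormedAddCommGroup Y] [NormedSpace ℝ Y]
    [NormedAddCommGroup Z] [NormedSpace ℝ Z]
    (t : X →L[ℝ] Y →L[ℝ] Z) (z : Z) : Prop :=
  ∃ (x : ℕ → X) (y : ℕ → Y),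
    Summable (fun n => ‖x n‖ * ‖y n‖) ∧ HasSum (fun n => t (x n) (y n)) z ∧
    ‖z‖ = ∑' n, ‖x n‖ * ‖y n‖

/-- A Banach space `X` has the metric π-property: for every ε > 0 and finite set of unit
vectors there is a finite dimensional `1`-complemented subspace (the range of a norm-one
projection) containing ε-approximations of all of them. -/
def MetricPiProperty (X : Type*) [NormedAddCommGroup X] [NormedSpace ℝ X] : Prop :=
  ∀ ε : ℝ, 0 < ε → ∀ s : Finset X, (∀ x ∈ s, ‖x‖ = 1) →
    ∃ P : X →L[ℝ] X, IsIdempotentElem P ∧ ‖P‖ = 1 ∧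
      FiniteDimensional ℝ (LinearMap.range (P : X →ₗ[ℝ] X)) ∧
      ∀ x ∈ s, ∃ x' ∈ LinearMap.range (P : X →ₗ[ℝ] X), ‖x - x'‖ < ε

section AuxLemmas

variable {X Y Z : Type*}
    [NormedAddCommGroup X] [NormedSpace ℝ X]
    [NormedAddCommGroup Y] [NormedSpace ℝ Y]
    [NormedAddCommGroup Z] [NormedSpace ℝ Z]
    {t : X →L[ℝ] Y →L[ℝ] Z}
    {lift : (X →L[ℝ] (Y →L[ℝ] ℝ)) → (Z →L[ℝ] ℝ)}

lemma aux_hasSum_lift (h : IsProjTensorProduct X Y Z t lift)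
    (G : X →L[ℝ] (Y →L[ℝ] ℝ)) {x : ℕ → X} {y : ℕ → Y} {z : Z}
    (hz : HasSum (fun n => t (x n) (y n)) z) :
    HasSum (fun n => G (x n) (y n)) (lift G z) := by
  have := (lift G).hasSum hz
  simpa [h.lift_tmul] using this

lemma aux_eq_of_forall_lift (h : IsProjTensorProduct X Y Z t lift)
    {z w : Z} (hzw : ∀ G, lift G z = lift G w) : z = w := by
  by_contra hne
  have hd : z - w ≠ 0 := sub_ne_zero.mpr hne
  obtain ⟨g, hg1, hgz⟩ := exists_dual_vector ℝ (z - w) (norm_ne_zero_iff.mpr hd)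
  obtain ⟨G, rfl⟩ := h.lift_surjective g
  have h1 : lift G z - lift G w = ‖z - w‖ := by
    rw [← map_sub]; simpa using hgz
  rw [hzw G, sub_self] at h1
  exact hd (norm_eq_zero.mp h1.symm)

lemma aux_norming (h : IsProjTensorProduct X Y Z t lift)
    {z : Z} (hz : z ≠ 0) : ∃ G, ‖G‖ = 1 ∧ lift G z = ‖z‖ := by
  obtain ⟨g, hg1, hgz⟩ := exists_dual_vector ℝ z (norm_ne_zero_iff.mpr hz)
  obtain ⟨G, rfl⟩ := h.lift_surjective g
  exact ⟨G, by rw [← h.norm_lift]; exact hg1, by simpa using hgz⟩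

lemma aux_attains (h : IsProjTensorProduct X Y Z t lift)
    (G : X →L[ℝ] (Y →L[ℝ] ℝ)) (hG : ‖G‖ ≤ 1) {x : ℕ → X} {y : ℕ → Y} {z : Z}
    (hsum : Summable (fun n => ‖x n‖ * ‖y n‖))
    (hz : HasSum (fun n => t (x n) (y n)) z)
    (hal : ∀ n, G (x n) (y n) = ‖x n‖ * ‖y n‖) :
    AttainsProjNorm t z := by
  refine ⟨x, y, hsum, hz, le_antisymm ?_ ?_⟩
  · have hsn : Summable (fun n => ‖t (x n) (y n)‖) :=
      hsum.of_nonneg_of_le (fun n => norm_nonneg _) (fun n => h.norm_tmul_le _ _)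
    calc ‖z‖ = ‖∑' n, t (x n) (y n)‖ := by rw [hz.tsum_eq]
      _ ≤ ∑' n, ‖t (x n) (y n)‖ := norm_tsum_le_tsum_norm hsn
      _ ≤ ∑' n, ‖x n‖ * ‖y n‖ := Summable.tsum_le_tsum (fun n => h.norm_tmul_le _ _) hsn hsum
  · have h1 : ∑' n, ‖x n‖ * ‖y n‖ = lift G z := by
      rw [← (aux_hasSum_lift h G hz).tsum_eq]
      exact tsum_congr fun n => (hal n).symm
    have h2 : lift G z ≤ ‖z‖ := by
      calc lift G z ≤ ‖lift G z‖ := le_abs_self _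
        _ ≤ ‖lift G‖ * ‖z‖ := (lift G).le_opNorm z
        _ ≤ 1 * ‖z‖ := by
            apply mul_le_mul_of_nonneg_right _ (norm_nonneg _)
            rw [h.norm_lift]; exact hG
        _ = ‖z‖ := one_mul _
    linarith [h1, h2]

lemma aux_uc {E : Type*} [NormedAddCommGroup E] [UniformConvexSpace E]
    {ε : ℝ} (hε : 0 < ε) :
    ∃ δ, 0 < δ ∧ ∀ x y : E, ‖x‖ = 1 → ‖y‖ = 1 → 2 - δ < ‖x + y‖ → ‖x - y‖ < ε := by
  obtain ⟨δ, hδ, H⟩ := UniformConvexSpace.uniform_convex (E := E) hε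
  refine ⟨δ, hδ, fun x y hx hy hxy => ?_⟩
  by_contra hc
  push_neg at hc
  exact absurd (H hx hy hc) (by linarith)

/-- In a uniformly convex complete space, every norm-one functional attains its norm. -/
lemma aux_dual_attains [UniformConvexSpace Y] [CompleteSpace Y]
    (g : Y →L[ℝ] ℝ) (hg : ‖g‖ = 1) : ∃ v : Y, ‖v‖ = 1 ∧ g v = 1 := by
  have hstep : ∀ n : ℕ, ∃ v : Y, ‖v‖ = 1 ∧ 1 - 1 / (n + 1) < g v := by
    intro n
    have hpos : (0 : ℝ) < 1 / ((n : ℝ) + 1) := by positivity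
    have hr0 : (0 : ℝ) ≤ 1 - 1 / ((n : ℝ) + 1) := by
      have : 1 / ((n : ℝ) + 1) ≤ 1 := by
        rw [div_le_one (by positivity)]; linarith [Nat.cast_nonneg (α := ℝ) n]
      linarith
    have h1 : (1 : ℝ) - 1 / (n + 1) < ‖g‖ := by rw [hg]; linarith
    obtain ⟨w, hw, hgw⟩ := g.exists_lt_apply_of_lt_opNorm h1
    -- replace w by ±w so that g is positive on it
    obtain ⟨w', hw', hgw'⟩ : ∃ w' : Y, ‖w'‖ < 1 ∧ 1 - 1 / (n + 1) < g w' := by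
      rcases le_or_gt 0 (g w) with hsgn | hsgn
      · exact ⟨w, hw, by rwa [Real.norm_eq_abs, abs_of_nonneg hsgn] at hgw⟩
      · refine ⟨-w, by simpa using hw, ?_⟩
        rw [map_neg]
        rwa [Real.norm_eq_abs, abs_of_neg hsgn] at hgw
    have hgw'pos : 0 < g w' := lt_of_le_of_lt hr0 hgw'
    have hw'ne : w' ≠ 0 := by
      intro h0; rw [h0, map_zero] at hgw'pos; exact lt_irrefl 0 hgw'pos
    have hnw' : 0 < ‖w'‖ := norm_pos_iff.mpr hw'ne
    refine ⟨‖w'‖⁻¹ • w', norm_smul_inv_norm hw'ne, ?_⟩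
    have : g (‖w'‖⁻¹ • w') = ‖w'‖⁻¹ * g w' := by
      rw [map_smul]; simp
    rw [this]
    have hinv : (1 : ℝ) ≤ ‖w'‖⁻¹ := by
      rw [le_inv_comm₀ one_pos hnw'] <;> try skip
      · simpa using hw'.le
    calc 1 - 1 / ((n : ℝ) + 1) < g w' := hgw'
      _ = 1 * g w' := (one_mul _).symm
      _ ≤ ‖w'‖⁻¹ * g w' := mul_le_mul_of_nonneg_right hinv hgw'pos.le
  choose v hv1 hv2 using hstep
  have hvle : ∀ n, g (v n) ≤ 1 := by
    intro n
    calc g (v n) ≤ ‖g (v n)‖ := le_abs_self _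
      _ ≤ ‖g‖ * ‖v n‖ := g.le_opNorm _
      _ = 1 := by rw [hg, hv1, mul_one]
  have hcauchy : CauchySeq v := by
    rw [Metric.cauchySeq_iff]
    intro ε hε
    obtain ⟨δ, hδ, hUC⟩ := aux_uc (E := Y) hε
    obtain ⟨N, hN⟩ := exists_nat_gt (2 / δ)
    refine ⟨N, fun p hp q hq => ?_⟩
    have hbound : ∀ k, N ≤ k → 1 - δ / 2 < g (v k) := by
      intro k hk
      have h1 : 1 / ((k : ℝ) + 1) ≤ 1 / ((N : ℝ) + 1) := by
        apply one_div_le_one_div_of_le (by positivity)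
        have := Nat.cast_le (α := ℝ).mpr hk; linarith
      have h2 : 1 / ((N : ℝ) + 1) < δ / 2 := by
        rw [div_lt_iff₀ (by positivity)]
        rw [div_lt_iff₀ hδ] at hN
        nlinarith [hδ]
      have := hv2 k
      linarith
    have hsum : 2 - δ < ‖v p + v q‖ := by
      have h1 := hbound p hp
      have h2 := hbound q hq
      have h3 : g (v p + v q) ≤ ‖v p + v q‖ := by
        calc g (v p + v q) ≤ ‖g (v p + v q)‖ := le_abs_self _
          _ ≤ ‖g‖ * ‖v p + v q‖ := g.le_opNorm _
          _ = ‖v p + v q‖ := by rw [hg, one_mul]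
      rw [map_add] at h3
      linarith
    rw [dist_eq_norm]
    exact hUC _ _ (hv1 p) (hv1 q) hsum
  obtain ⟨vlim, hvlim⟩ := cauchySeq_tendsto_of_complete hcauchy
  have hnorm : ‖vlim‖ = 1 := by
    have h1 : Filter.Tendsto (fun n => ‖v n‖) Filter.atTop (nhds ‖vlim‖) := hvlim.norm
    have h2 : Filter.Tendsto (fun n => ‖v n‖) Filter.atTop (nhds 1) := by
      have hc : Filter.Tendsto (fun _ : ℕ => (1:ℝ)) Filter.atTop (nhds 1) := tendsto_const_nhds
      simpa [hv1] using hc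
    exact tendsto_nhds_unique h1 h2
  have hgv : g vlim = 1 := by
    have h1 : Filter.Tendsto (fun n => g (v n)) Filter.atTop (nhds (g vlim)) :=
      (g.continuous.tendsto vlim).comp hvlim
    have hlow : Filter.Tendsto (fun n : ℕ => 1 - 1 / ((n : ℝ) + 1)) Filter.atTop (nhds 1) := by
      have : Filter.Tendsto (fun n : ℕ => 1 / ((n : ℝ) + 1)) Filter.atTop (nhds 0) :=
        tendsto_one_div_add_atTop_nhds_zero_nat
      have hc : Filter.Tendsto (fun _ : ℕ => (1:ℝ)) Filter.atTop (nhds 1) := tendsto_const_nhds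
      simpa using hc.sub this
    have h2 : Filter.Tendsto (fun n => g (v n)) Filter.atTop (nhds 1) := by
      apply tendsto_of_tendsto_of_tendsto_of_le_of_le hlow tendsto_const_nhds
      · exact fun n => (hv2 n).le
      · exact hvle
    exact tendsto_nhds_unique h1 h2
  exact ⟨vlim, hnorm, hgv⟩


lemma aux_tsmul (t : X →L[ℝ] Y →L[ℝ] Z) (a : X) (b : Y) (c : ℝ) :
    t (c • a) b = c • t a b := by simp

set_option maxHeartbeats 2000000 in
/-- Core approximation lemma: any element which "lives on" the range of a norm-one
finite-dimensional projection can be approximated by norm-attaining tensors. -/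
lemma aux_core [UniformConvexSpace Y] [CompleteSpace Y] [CompleteSpace Z]
    (h : IsProjTensorProduct X Y Z t lift)
    (P : X →L[ℝ] X) (hPidem : IsIdempotentElem P) (hPnorm : ‖P‖ = 1)
    (hfd : FiniteDimensional ℝ (LinearMap.range (P : X →ₗ[ℝ] X)))
    {z₁ : Z} (hz₁ : ∀ G, lift (G.comp P) z₁ = lift G z₁)
    {ε : ℝ} (hε : 0 < ε) :
    ∃ w, AttainsProjNorm t w ∧ ‖z₁ - w‖ < ε := by
  haveI := hfd
  by_cases hz0 : z₁ = 0
  · have hzero : AttainsProjNorm t (0 : Z) := by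
      refine ⟨fun _ => 0, fun _ => 0, ?_, ?_, ?_⟩
      · simpa using (summable_zero : Summable fun _ : ℕ => (0:ℝ))
      · simpa using (hasSum_zero : HasSum (fun _ : ℕ => (0:Z)) 0)
      · simp
    refine ⟨0, hzero, ?_⟩
    simpa [hz0] using hε
  have hc : 0 < ‖z₁‖ := norm_pos_iff.mpr hz0
  obtain ⟨G, hG1, hGz⟩ := aux_norming h hz0
  have Gsmul2 : ∀ (a : X) (b : Y) (ca cb : ℝ), G (ca • a) (cb • b) = (ca * cb) * G a b := by
    intro a b ca cb
    simp [smul_smul]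
    ring
  have Gsmul1 : ∀ (a : X) (b : Y) (ca : ℝ), G (ca • a) b = ca * G a b := by
    intro a b ca
    simp
  have tsmul2 : ∀ (a : X) (b : Y) (ca cb : ℝ), t (ca • a) (cb • b) = (ca * cb) • t a b := by
    intro a b ca cb
    simp [smul_smul, mul_comm]
  have hPle : ∀ u : X, ‖P u‖ ≤ ‖u‖ := fun u => by
    calc ‖P u‖ ≤ ‖P‖ * ‖u‖ := P.le_opNorm u
      _ = ‖u‖ := by rw [hPnorm, one_mul]
  -- near-optimal representations supported in the range of P
  have rep_ex : ∀ η : ℝ, 0 < η → ∃ (x : ℕ → X) (y : ℕ → Y),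
      (∀ n, x n ∈ LinearMap.range (P : X →ₗ[ℝ] X)) ∧ Summable (fun n => ‖x n‖ * ‖y n‖) ∧
      HasSum (fun n => t (x n) (y n)) z₁ ∧ ∑' n, ‖x n‖ * ‖y n‖ < ‖z₁‖ + η := by
    intro η hη
    have hSne : {r : ℝ | ∃ (x : ℕ → X) (y : ℕ → Y),
        Summable (fun n => ‖x n‖ * ‖y n‖) ∧ HasSum (fun n => t (x n) (y n)) z₁ ∧
        r = ∑' n, ‖x n‖ * ‖y n‖}.Nonempty := by
      obtain ⟨x, y, hs, hh⟩ := h.exists_rep z₁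
      exact ⟨_, x, y, hs, hh, rfl⟩
    obtain ⟨r, hrS, hrlt⟩ := Real.lt_sInf_add_pos hSne hη
    obtain ⟨x, y, hs, hh, rfl⟩ := hrS
    have hbnd : ∀ n, ‖P (x n)‖ * ‖y n‖ ≤ ‖x n‖ * ‖y n‖ :=
      fun n => mul_le_mul_of_nonneg_right (hPle _) (norm_nonneg _)
    have hs' : Summable (fun n => ‖P (x n)‖ * ‖y n‖) :=
      hs.of_nonneg_of_le (fun n => by positivity) hbnd
    have hts : Summable (fun n => t (P (x n)) (y n)) := by
      apply Summable.of_norm_bounded hs'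
      exact fun n => h.norm_tmul_le _ _
    have hh' : HasSum (fun n => t (P (x n)) (y n)) (∑' n, t (P (x n)) (y n)) := hts.hasSum
    have heq : (∑' n, t (P (x n)) (y n)) = z₁ := by
      apply aux_eq_of_forall_lift h
      intro G'
      have e1 : lift G' (∑' n, t (P (x n)) (y n)) = ∑' n, G' (P (x n)) (y n) :=
        (aux_hasSum_lift h G' hh').tsum_eq.symm
      have e2 : lift (G'.comp P) z₁ = ∑' n, G' (P (x n)) (y n) :=
        (aux_hasSum_lift h (G'.comp P) hh).tsum_eq.symm
      rw [e1, ← e2, hz₁ G']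
    rw [heq] at hh'
    refine ⟨fun n => P (x n), y, fun n => LinearMap.mem_range_self _ _, hs', hh', ?_⟩
    have h1 := Summable.tsum_le_tsum hbnd hs' hs
    have hnorm := h.norm_eq_sInf z₁
    rw [← hnorm] at hrlt
    linarith
  -- the compact unit sphere of the range of P
  set M : Submodule ℝ X := LinearMap.range (P : X →ₗ[ℝ] X) with hM
  set K : Set X := {u : X | u ∈ M ∧ ‖u‖ = 1} with hKdef
  have hKcompact : IsCompact K := by
    have h1 : IsCompact (Metric.sphere (0 : M) 1) := isCompact_sphere 0 1
    have h2 : IsCompact (Subtype.val '' (Metric.sphere (0 : M) 1)) :=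
      h1.image continuous_subtype_val
    have h3 : K = Subtype.val '' (Metric.sphere (0 : M) 1) := by
      ext u
      constructor
      · rintro ⟨huM, hun⟩
        refine ⟨⟨u, huM⟩, ?_, rfl⟩
        rw [mem_sphere_zero_iff_norm]
        exact hun
      · rintro ⟨mm, hmm, rfl⟩
        rw [mem_sphere_zero_iff_norm] at hmm
        exact ⟨mm.2, hmm⟩
    rw [h3]; exact h2
  have hGcont : Continuous fun u : X => ‖G u‖ := G.continuous.norm
  -- K is nonempty
  have hKne : K.Nonempty := by
    obtain ⟨x, y, hmem, hms, hh, _⟩ := rep_ex 1 one_pos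
    have hne : ∑' n, G (x n) (y n) ≠ 0 := by
      rw [(aux_hasSum_lift h G hh).tsum_eq, hGz]
      exact ne_of_gt hc
    have : ∃ n, G (x n) (y n) ≠ 0 := by
      by_contra hall
      push_neg at hall
      exact hne (by rw [funext hall]; exact tsum_zero)
    obtain ⟨n, hn⟩ := this
    have hxne : x n ≠ 0 := by
      intro h0
      rw [h0] at hn
      simp at hn
    exact ⟨‖x n‖⁻¹ • x n, M.smul_mem _ (hmem n), norm_smul_inv_norm hxne⟩
  obtain ⟨p₀, hp₀K, hp₀max⟩ := hKcompact.exists_isMaxOn hKne hGcont.continuousOn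
  have hβle : ‖G p₀‖ ≤ 1 := by
    calc ‖G p₀‖ ≤ ‖G‖ * ‖p₀‖ := G.le_opNorm _
      _ = 1 := by rw [hG1, hp₀K.2, mul_one]
  have hterm_le : ∀ u : X, u ∈ M → ∀ b : Y, G u b ≤ ‖G p₀‖ * (‖u‖ * ‖b‖) := by
    intro u huM b
    by_cases hu : u = 0
    · simp [hu]
    · have hnu : 0 < ‖u‖ := norm_pos_iff.mpr hu
      have hvK : ‖u‖⁻¹ • u ∈ K := ⟨M.smul_mem _ huM, norm_smul_inv_norm hu⟩
      have hGv : ‖G (‖u‖⁻¹ • u)‖ ≤ ‖G p₀‖ := hp₀max hvK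
      have hrepr : u = ‖u‖ • (‖u‖⁻¹ • u) := by
        rw [smul_smul, mul_inv_cancel₀ hnu.ne', one_smul]
      calc G u b = ‖u‖ * (G (‖u‖⁻¹ • u) b) := by
            rw [Gsmul1]
            field_simp
        _ ≤ ‖u‖ * (‖G p₀‖ * ‖b‖) := by
            apply mul_le_mul_of_nonneg_left _ hnu.le
            calc G (‖u‖⁻¹ • u) b ≤ ‖G (‖u‖⁻¹ • u) b‖ := le_abs_self _
              _ ≤ ‖G (‖u‖⁻¹ • u)‖ * ‖b‖ := (G _).le_opNorm _
              _ ≤ ‖G p₀‖ * ‖b‖ := mul_le_mul_of_nonneg_right hGv (norm_nonneg _)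
        _ = ‖G p₀‖ * (‖u‖ * ‖b‖) := by ring
  have hβge : 1 ≤ ‖G p₀‖ := by
    have key : ∀ η : ℝ, 0 < η → ‖z₁‖ ≤ ‖G p₀‖ * (‖z₁‖ + η) := by
      intro η hη
      obtain ⟨x, y, hmem, hms, hh, hlt⟩ := rep_ex η hη
      have hGsum : Summable (fun n => G (x n) (y n)) := (aux_hasSum_lift h G hh).summable
      have h1 : ‖z₁‖ = ∑' n, G (x n) (y n) := by
        rw [(aux_hasSum_lift h G hh).tsum_eq, hGz]
      have h2 : ∑' n, G (x n) (y n) ≤ ∑' n, ‖G p₀‖ * (‖x n‖ * ‖y n‖) :=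
        Summable.tsum_le_tsum (fun n => hterm_le _ (hmem n) _) hGsum (hms.mul_left _)
      have h3 : ∑' n, ‖G p₀‖ * (‖x n‖ * ‖y n‖) = ‖G p₀‖ * ∑' n, (‖x n‖ * ‖y n‖) :=
        tsum_mul_left
      have h4 : ‖G p₀‖ * ∑' n, (‖x n‖ * ‖y n‖) ≤ ‖G p₀‖ * (‖z₁‖ + η) :=
        mul_le_mul_of_nonneg_left hlt.le (norm_nonneg _)
      linarith
    by_contra hltc
    push_neg at hltc
    have hβ0 : 0 ≤ ‖G p₀‖ := norm_nonneg _
    have hηpos : 0 < ‖z₁‖ * (1 - ‖G p₀‖) / 2 := by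
      apply div_pos (mul_pos hc (by linarith)) two_pos
    have := key _ hηpos
    nlinarith [this, hc, hβ0, hltc]
  have hβ : ‖G p₀‖ = 1 := le_antisymm hβle hβge
  -- points where G almost attains 1 on the sphere of M are close to points where it does
  have hclaim : ∀ ρ : ℝ, 0 < ρ → ∃ δ₂ : ℝ, 0 < δ₂ ∧ ∀ u ∈ K, 1 - δ₂ ≤ ‖G u‖ →
      ∃ p, (p ∈ K ∧ ‖G p‖ = 1) ∧ ‖u - p‖ ≤ ρ := by
    intro ρ hρ
    by_contra hcon
    push_neg at hcon
    have hseq : ∀ n : ℕ, ∃ u, u ∈ K ∧ (1 - 1/((n:ℝ)+1) ≤ ‖G u‖) ∧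
        ∀ p, (p ∈ K ∧ ‖G p‖ = 1) → ρ < ‖u - p‖ := by
      intro n
      obtain ⟨u, huK, hGu, hfar⟩ := hcon (1/((n:ℝ)+1)) (by positivity)
      exact ⟨u, huK, hGu, fun p hp => hfar p hp⟩
    choose u huK hGu hfar using hseq
    obtain ⟨a, haK, φ, hφ, hconv⟩ := hKcompact.tendsto_subseq huK
    have hGa : ‖G a‖ = 1 := by
      have hGale : ‖G a‖ ≤ 1 := by
        calc ‖G a‖ ≤ ‖G‖ * ‖a‖ := G.le_opNorm _
          _ = 1 := by rw [hG1, haK.2, mul_one]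
      refine le_antisymm hGale ?_
      have hlim1 : Filter.Tendsto (fun k => ‖G (u (φ k))‖) Filter.atTop (nhds ‖G a‖) :=
        (hGcont.tendsto a).comp hconv
      have h0 : Filter.Tendsto (fun n : ℕ => 1 - 1/((n:ℝ)+1)) Filter.atTop (nhds 1) := by
        have hc1 : Filter.Tendsto (fun _ : ℕ => (1:ℝ)) Filter.atTop (nhds 1) :=
          tendsto_const_nhds
        simpa using hc1.sub tendsto_one_div_add_atTop_nhds_zero_nat
      have hlow : Filter.Tendsto (fun k : ℕ => 1 - 1/((φ k : ℝ)+1)) Filter.atTop (nhds 1) :=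
        h0.comp hφ.tendsto_atTop
      exact le_of_tendsto_of_tendsto' hlow hlim1 (fun k => hGu (φ k))
    have hfar' : ∀ k, ρ < ‖u (φ k) - a‖ := fun k => hfar (φ k) a ⟨haK, hGa⟩
    have hconv' : Filter.Tendsto (fun k => ‖u (φ k) - a‖) Filter.atTop (nhds 0) := by
      have := (hconv.sub (tendsto_const_nhds (x := a))).norm
      simpa using this
    obtain ⟨k, hk⟩ := (hconv'.eventually (eventually_lt_nhds hρ)).exists
    exact absurd (hfar' k) (not_lt.mpr hk.le)
  -- choose all the parameters
  set ε₃ := ε / (4 * (‖z₁‖ + 1)) with hε₃def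
  have hc0 : (0:ℝ) ≤ ‖z₁‖ := norm_nonneg _
  have hε₃ : 0 < ε₃ := by
    apply div_pos hε
    nlinarith
  obtain ⟨δu, hδu, hUC⟩ := aux_uc (E := Y) hε₃
  set ρ := min ε₃ (δu/4) with hρdef
  have hρ : 0 < ρ := lt_min hε₃ (by linarith)
  obtain ⟨δ₂, hδ₂, hnear⟩ := hclaim ρ hρ
  set δ₀ := min δ₂ (δu/4) with hδ₀def
  have hδ₀ : 0 < δ₀ := lt_min hδ₂ (by linarith)
  set η := min 1 (δ₀ * ε / 4) with hηdef
  have hη : 0 < η := lt_min one_pos (by positivity)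
  obtain ⟨x, y, hmem, hms, hh, hlt⟩ := rep_ex η hη
  have hm0 : ∀ n, (0:ℝ) ≤ ‖x n‖ * ‖y n‖ := fun n => by positivity
  have hGsum : Summable (fun n => G (x n) (y n)) := (aux_hasSum_lift h G hh).summable
  have hd0 : ∀ n, G (x n) (y n) ≤ ‖x n‖ * ‖y n‖ := by
    intro n
    calc G (x n) (y n) ≤ ‖G (x n) (y n)‖ := le_abs_self _
      _ ≤ ‖G (x n)‖ * ‖y n‖ := (G (x n)).le_opNorm _
      _ ≤ (‖G‖ * ‖x n‖) * ‖y n‖ :=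
          mul_le_mul_of_nonneg_right (G.le_opNorm _) (norm_nonneg _)
      _ = ‖x n‖ * ‖y n‖ := by rw [hG1, one_mul]
  have hdsum : Summable (fun n => ‖x n‖ * ‖y n‖ - G (x n) (y n)) := hms.sub hGsum
  have htsum_d : ∑' n, (‖x n‖ * ‖y n‖ - G (x n) (y n)) < η := by
    have h1 : ∑' n, (‖x n‖ * ‖y n‖ - G (x n) (y n))
        = (∑' n, ‖x n‖ * ‖y n‖) - ∑' n, G (x n) (y n) := Summable.tsum_sub hms hGsum
    have h2 : ∑' n, G (x n) (y n) = ‖z₁‖ := by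
      rw [(aux_hasSum_lift h G hh).tsum_eq, hGz]
    rw [h1, h2]
    linarith
  set kp : ℕ → Prop := fun n => 0 < ‖x n‖ * ‖y n‖ ∧
      ‖x n‖ * ‖y n‖ - G (x n) (y n) ≤ δ₀ * (‖x n‖ * ‖y n‖) with hkpdef
  have hkey : ∀ n, ∃ (p : X) (v : Y),
      (kp n → ‖p‖ = 1 ∧ G p v = 1 ∧ ‖v‖ = 1 ∧
        ‖t (x n) (y n) - t p ((‖x n‖ * ‖y n‖) • v)‖ ≤ (ρ + ε₃) * (‖x n‖ * ‖y n‖)) ∧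
      (¬ kp n → p = 0 ∧ v = 0) := by
    intro n
    by_cases hn : kp n
    · obtain ⟨hmn, hdn⟩ := hn
      have hxne : x n ≠ 0 := by
        intro h0; rw [h0] at hmn; simp at hmn
      have hyne : y n ≠ 0 := by
        intro h0; rw [h0] at hmn; simp at hmn
      have hnx : 0 < ‖x n‖ := norm_pos_iff.mpr hxne
      have hny : 0 < ‖y n‖ := norm_pos_iff.mpr hyne
      have huuK : ‖x n‖⁻¹ • x n ∈ K := ⟨M.smul_mem _ (hmem n), norm_smul_inv_norm hxne⟩
      have hvb1 : ‖(‖y n‖⁻¹ • y n)‖ = 1 := norm_smul_inv_norm hyne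
      have hxr : x n = ‖x n‖ • (‖x n‖⁻¹ • x n) := by
        rw [smul_smul, mul_inv_cancel₀ hnx.ne', one_smul]
      have hyr : y n = ‖y n‖ • (‖y n‖⁻¹ • y n) := by
        rw [smul_smul, mul_inv_cancel₀ hny.ne', one_smul]
      have hsc : G (x n) (y n)
          = (‖x n‖ * ‖y n‖) * (G (‖x n‖⁻¹ • x n) (‖y n‖⁻¹ • y n)) := by
        rw [Gsmul2]
        field_simp
      have hGuuvb : 1 - δ₀ ≤ G (‖x n‖⁻¹ • x n) (‖y n‖⁻¹ • y n) := by
        have hdn' := hdn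
        rw [hsc] at hdn'
        have h6 : (‖x n‖ * ‖y n‖) * (1 - G (‖x n‖⁻¹ • x n) (‖y n‖⁻¹ • y n))
            ≤ (‖x n‖ * ‖y n‖) * δ₀ := by linear_combination hdn'
        have h7 := le_of_mul_le_mul_left h6 hmn
        linarith
      have hGuu : 1 - δ₂ ≤ ‖G (‖x n‖⁻¹ • x n)‖ := by
        have h1 : G (‖x n‖⁻¹ • x n) (‖y n‖⁻¹ • y n) ≤ ‖G (‖x n‖⁻¹ • x n)‖ := by
          calc G (‖x n‖⁻¹ • x n) (‖y n‖⁻¹ • y n)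
              ≤ ‖G (‖x n‖⁻¹ • x n) (‖y n‖⁻¹ • y n)‖ := le_abs_self _
            _ ≤ ‖G (‖x n‖⁻¹ • x n)‖ * ‖(‖y n‖⁻¹ • y n)‖ := (G _).le_opNorm _
            _ = ‖G (‖x n‖⁻¹ • x n)‖ := by rw [hvb1, mul_one]
        have h2 : δ₀ ≤ δ₂ := min_le_left _ _
        linarith
      obtain ⟨p, hpK1, hup⟩ := hnear _ huuK hGuu
      obtain ⟨hpK, hGp1⟩ := hpK1
      obtain ⟨v, hv1, hGpv⟩ := aux_dual_attains (G p) hGp1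
      have hdist : ‖G (‖x n‖⁻¹ • x n) - G p‖ ≤ ρ := by
        rw [← map_sub]
        calc ‖G ((‖x n‖⁻¹ • x n) - p)‖ ≤ ‖G‖ * ‖(‖x n‖⁻¹ • x n) - p‖ := G.le_opNorm _
          _ = ‖(‖x n‖⁻¹ • x n) - p‖ := by rw [hG1, one_mul]
          _ ≤ ρ := hup
      have hGpvb : 1 - δ₀ - ρ ≤ G p (‖y n‖⁻¹ • y n) := by
        have h2 : G (‖x n‖⁻¹ • x n) (‖y n‖⁻¹ • y n) - G p (‖y n‖⁻¹ • y n) ≤ ρ := by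
          calc G (‖x n‖⁻¹ • x n) (‖y n‖⁻¹ • y n) - G p (‖y n‖⁻¹ • y n)
              = (G (‖x n‖⁻¹ • x n) - G p) (‖y n‖⁻¹ • y n) := by
                rw [ContinuousLinearMap.sub_apply]
            _ ≤ ‖(G (‖x n‖⁻¹ • x n) - G p) (‖y n‖⁻¹ • y n)‖ := le_abs_self _
            _ ≤ ‖G (‖x n‖⁻¹ • x n) - G p‖ * ‖(‖y n‖⁻¹ • y n)‖ :=
                (G (‖x n‖⁻¹ • x n) - G p).le_opNorm _
            _ ≤ ρ := by rw [hvb1, mul_one]; exact hdist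
        linarith
      have hclose : ‖(‖y n‖⁻¹ • y n) - v‖ < ε₃ := by
        apply hUC _ _ hvb1 hv1
        have h1 : G p ((‖y n‖⁻¹ • y n) + v) ≤ ‖(‖y n‖⁻¹ • y n) + v‖ := by
          calc G p ((‖y n‖⁻¹ • y n) + v) ≤ ‖G p ((‖y n‖⁻¹ • y n) + v)‖ := le_abs_self _
            _ ≤ ‖G p‖ * ‖(‖y n‖⁻¹ • y n) + v‖ := (G p).le_opNorm _
            _ = ‖(‖y n‖⁻¹ • y n) + v‖ := by rw [hGp1, one_mul]
        rw [map_add, hGpv] at h1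
        have hρ4 : ρ ≤ δu/4 := min_le_right _ _
        have hδ04 : δ₀ ≤ δu/4 := min_le_right _ _
        linarith
      refine ⟨p, v, fun _ => ⟨hpK.2, hGpv, hv1, ?_⟩, fun hcon => absurd ⟨hmn, hdn⟩ hcon⟩
      have e1 : t (x n) (y n) = (‖x n‖ * ‖y n‖) • (t (‖x n‖⁻¹ • x n) (‖y n‖⁻¹ • y n)) := by
        rw [tsmul2, smul_smul]
        have hone : (‖x n‖ * ‖y n‖) * (‖x n‖⁻¹ * ‖y n‖⁻¹) = 1 := by
          field_simp
        rw [hone, one_smul]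
      have e2 : t p ((‖x n‖ * ‖y n‖) • v) = (‖x n‖ * ‖y n‖) • (t p v) := map_smul _ _ _
      rw [e1, e2, ← smul_sub, norm_smul, Real.norm_eq_abs, abs_of_nonneg (hm0 n)]
      have hdiff : ‖t (‖x n‖⁻¹ • x n) (‖y n‖⁻¹ • y n) - t p v‖ ≤ ρ + ε₃ := by
        have hsplit : t (‖x n‖⁻¹ • x n) (‖y n‖⁻¹ • y n) - t p v
            = t ((‖x n‖⁻¹ • x n) - p) (‖y n‖⁻¹ • y n) + t p ((‖y n‖⁻¹ • y n) - v) := by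
          rw [map_sub, ContinuousLinearMap.sub_apply, map_sub]
          abel
        rw [hsplit]
        calc ‖t ((‖x n‖⁻¹ • x n) - p) (‖y n‖⁻¹ • y n) + t p ((‖y n‖⁻¹ • y n) - v)‖
            ≤ ‖t ((‖x n‖⁻¹ • x n) - p) (‖y n‖⁻¹ • y n)‖ + ‖t p ((‖y n‖⁻¹ • y n) - v)‖ :=
              norm_add_le _ _
          _ ≤ ‖(‖x n‖⁻¹ • x n) - p‖ * ‖(‖y n‖⁻¹ • y n)‖ + ‖p‖ * ‖(‖y n‖⁻¹ • y n) - v‖ :=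
              add_le_add (h.norm_tmul_le _ _) (h.norm_tmul_le _ _)
          _ ≤ ρ + ε₃ := by
              rw [hvb1, mul_one, hpK.2, one_mul]
              exact add_le_add hup hclose.le
      calc (‖x n‖ * ‖y n‖) * ‖t (‖x n‖⁻¹ • x n) (‖y n‖⁻¹ • y n) - t p v‖
          ≤ (‖x n‖ * ‖y n‖) * (ρ + ε₃) := mul_le_mul_of_nonneg_left hdiff (hm0 n)
        _ = (ρ + ε₃) * (‖x n‖ * ‖y n‖) := by ring
    · exact ⟨0, 0, fun hk => absurd hk hn, fun _ => ⟨rfl, rfl⟩⟩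
  choose p v hkp hnkp using hkey
  have hmass : ∀ n, ‖p n‖ * ‖(‖x n‖ * ‖y n‖) • v n‖ ≤ ‖x n‖ * ‖y n‖ := by
    intro n
    by_cases hn : kp n
    · obtain ⟨hp1, _, hv1, _⟩ := hkp n hn
      rw [hp1, norm_smul, Real.norm_eq_abs, abs_of_nonneg (hm0 n), hv1]
      simp
    · obtain ⟨hp0, _⟩ := hnkp n hn
      rw [hp0]
      simpa using hm0 n
  have hmsum : Summable (fun n => ‖p n‖ * ‖(‖x n‖ * ‖y n‖) • v n‖) :=
    hms.of_nonneg_of_le (fun n => by positivity) hmass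
  have htsummable : Summable (fun n => t (p n) ((‖x n‖ * ‖y n‖) • v n)) := by
    apply Summable.of_norm_bounded hms
    exact fun n => le_trans (h.norm_tmul_le _ _) (hmass n)
  have hw : HasSum (fun n => t (p n) ((‖x n‖ * ‖y n‖) • v n))
      (∑' n, t (p n) ((‖x n‖ * ‖y n‖) • v n)) := htsummable.hasSum
  have hal : ∀ n, G (p n) ((‖x n‖ * ‖y n‖) • v n) = ‖p n‖ * ‖(‖x n‖ * ‖y n‖) • v n‖ := by
    intro n
    by_cases hn : kp n
    · obtain ⟨hp1, hGpv, hv1, _⟩ := hkp n hn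
      rw [map_smul, smul_eq_mul, hGpv, hp1, norm_smul, Real.norm_eq_abs,
        abs_of_nonneg (hm0 n), hv1]
      ring
    · obtain ⟨hp0, _⟩ := hnkp n hn
      simp [hp0]
  have hattains : AttainsProjNorm t (∑' n, t (p n) ((‖x n‖ * ‖y n‖) • v n)) :=
    aux_attains h G (le_of_eq hG1) hmsum hw hal
  refine ⟨_, hattains, ?_⟩
  -- distance estimate
  have hdiffsum : HasSum (fun n => t (x n) (y n) - t (p n) ((‖x n‖ * ‖y n‖) • v n))
      (z₁ - ∑' n, t (p n) ((‖x n‖ * ‖y n‖) • v n)) := hh.sub hw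
  have hbnds : Summable (fun n => (ρ + ε₃) * (‖x n‖ * ‖y n‖)
      + (1/δ₀) * (‖x n‖ * ‖y n‖ - G (x n) (y n))) :=
    (hms.mul_left _).add (hdsum.mul_left _)
  have hperterm : ∀ n, ‖t (x n) (y n) - t (p n) ((‖x n‖ * ‖y n‖) • v n)‖
      ≤ (ρ + ε₃) * (‖x n‖ * ‖y n‖) + (1/δ₀) * (‖x n‖ * ‖y n‖ - G (x n) (y n)) := by
    intro n
    by_cases hn : kp n
    · have h1 := (hkp n hn).2.2.2
      have h2 : 0 ≤ (1/δ₀) * (‖x n‖ * ‖y n‖ - G (x n) (y n)) := by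
        apply mul_nonneg (by positivity)
        linarith [hd0 n]
      linarith
    · obtain ⟨hp0, _⟩ := hnkp n hn
      rw [hp0]
      simp only [map_zero, ContinuousLinearMap.zero_apply, sub_zero]
      rcases lt_or_ge 0 (‖x n‖ * ‖y n‖) with hmn | hmn
      · have hdn : δ₀ * (‖x n‖ * ‖y n‖) < ‖x n‖ * ‖y n‖ - G (x n) (y n) := by
          by_contra hle
          push_neg at hle
          exact hn ⟨hmn, hle⟩
        have h1 : ‖t (x n) (y n)‖ ≤ ‖x n‖ * ‖y n‖ := h.norm_tmul_le _ _
        have h2 : ‖x n‖ * ‖y n‖ ≤ (1/δ₀) * (‖x n‖ * ‖y n‖ - G (x n) (y n)) := by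
          have h4 : (1/δ₀) * (δ₀ * (‖x n‖ * ‖y n‖))
              ≤ (1/δ₀) * (‖x n‖ * ‖y n‖ - G (x n) (y n)) :=
            mul_le_mul_of_nonneg_left hdn.le (by positivity)
          have h5 : (1/δ₀) * (δ₀ * (‖x n‖ * ‖y n‖)) = ‖x n‖ * ‖y n‖ := by
            field_simp
          linarith
        have h3 : 0 ≤ (ρ + ε₃) * (‖x n‖ * ‖y n‖) := by positivity
        linarith
      · have hmn0 : ‖x n‖ * ‖y n‖ = 0 := le_antisymm hmn (hm0 n)
        have h0 : t (x n) (y n) = 0 := by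
          rcases mul_eq_zero.mp hmn0 with h0 | h0
          · rw [norm_eq_zero.mp h0]; simp
          · rw [norm_eq_zero.mp h0]; simp
        rw [h0, norm_zero]
        have h2 : 0 ≤ (1/δ₀) * (‖x n‖ * ‖y n‖ - G (x n) (y n)) := by
          apply mul_nonneg (by positivity)
          linarith [hd0 n]
        have h3 : 0 ≤ (ρ + ε₃) * (‖x n‖ * ‖y n‖) := by positivity
        linarith
  have hns : Summable (fun n => ‖t (x n) (y n) - t (p n) ((‖x n‖ * ‖y n‖) • v n)‖) :=
    hbnds.of_nonneg_of_le (fun n => norm_nonneg _) hperterm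
  have hzw : ‖z₁ - ∑' n, t (p n) ((‖x n‖ * ‖y n‖) • v n)‖
      ≤ ∑' n, ((ρ + ε₃) * (‖x n‖ * ‖y n‖)
        + (1/δ₀) * (‖x n‖ * ‖y n‖ - G (x n) (y n))) := by
    calc ‖z₁ - ∑' n, t (p n) ((‖x n‖ * ‖y n‖) • v n)‖
        = ‖∑' n, (t (x n) (y n) - t (p n) ((‖x n‖ * ‖y n‖) • v n))‖ := by
          rw [hdiffsum.tsum_eq]
      _ ≤ ∑' n, ‖t (x n) (y n) - t (p n) ((‖x n‖ * ‖y n‖) • v n)‖ :=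
          norm_tsum_le_tsum_norm hns
      _ ≤ _ := Summable.tsum_le_tsum hperterm hns hbnds
  have htotal : ∑' n, ((ρ + ε₃) * (‖x n‖ * ‖y n‖)
      + (1/δ₀) * (‖x n‖ * ‖y n‖ - G (x n) (y n))) < ε := by
    have h1 : ∑' n, ((ρ + ε₃) * (‖x n‖ * ‖y n‖)
        + (1/δ₀) * (‖x n‖ * ‖y n‖ - G (x n) (y n)))
        = (ρ + ε₃) * (∑' n, ‖x n‖ * ‖y n‖)
          + (1/δ₀) * (∑' n, (‖x n‖ * ‖y n‖ - G (x n) (y n))) := by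
      rw [Summable.tsum_add (hms.mul_left _) (hdsum.mul_left _), tsum_mul_left, tsum_mul_left]
    have hρε₃ : ρ ≤ ε₃ := min_le_left _ _
    have hsumm0 : 0 ≤ ∑' n, ‖x n‖ * ‖y n‖ := tsum_nonneg hm0
    have hη1 : η ≤ 1 := min_le_left _ _
    have hη2 : η ≤ δ₀ * ε / 4 := min_le_right _ _
    have hd_total : 0 ≤ ∑' n, (‖x n‖ * ‖y n‖ - G (x n) (y n)) :=
      tsum_nonneg (fun n => by linarith [hd0 n])
    have e3 : ε₃ * (‖z₁‖ + 1) = ε / 4 := by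
      rw [hε₃def]
      field_simp
    have hA : (ρ + ε₃) * (∑' n, ‖x n‖ * ‖y n‖) ≤ 2 * ε₃ * (∑' n, ‖x n‖ * ‖y n‖) := by
      apply mul_le_mul_of_nonneg_right (by linarith) hsumm0
    have hB : 2 * ε₃ * (∑' n, ‖x n‖ * ‖y n‖) < 2 * ε₃ * (‖z₁‖ + 1) := by
      apply mul_lt_mul_of_pos_left _ (by positivity)
      linarith
    have hC : (1/δ₀) * (∑' n, (‖x n‖ * ‖y n‖ - G (x n) (y n))) < (1/δ₀) * η :=
      mul_lt_mul_of_pos_left htsum_d (by positivity)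
    have hD : (1/δ₀) * η ≤ ε / 4 := by
      have hDD : (1/δ₀) * η ≤ (1/δ₀) * (δ₀ * ε / 4) :=
        mul_le_mul_of_nonneg_left hη2 (by positivity)
      have hEE : (1/δ₀) * (δ₀ * ε / 4) = ε / 4 := by
        field_simp
      linarith
    rw [h1]
    nlinarith [hA, hB, hC, hD, e3, hε]
  exact lt_of_le_of_lt hzw htotal

end AuxLemmas

/-- If `X` satisfies the metric π-property and `Y` is uniformly convex,
then the set of norm-attaining tensors is dense in `X ⊗π Y`. -/
theorem tensor_normAttaining_dense_of_metricPi_uniformConvex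
    {X Y Z : Type*} [NormedAddCommGroup X] [NormedSpace ℝ X] [CompleteSpace X]
    [NormedAddCommGroup Y] [NormedSpace ℝ Y] [CompleteSpace Y] [UniformConvexSpace Y]
    [NormedAddCommGroup Z] [NormedSpace ℝ Z] [CompleteSpace Z]
    (t : X →L[ℝ] Y →L[ℝ] Z) (lift : (X →L[ℝ] (Y →L[ℝ] ℝ)) → (Z →L[ℝ] ℝ))
    (h : IsProjTensorProduct X Y Z t lift)
    (hX : MetricPiProperty X) :
    Dense {z : Z | AttainsProjNorm t z} := by
  classical
  rw [Metric.dense_iff]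
  intro z r hr
  have hr4 : 0 < r / 4 := by linarith
  -- Step 1: a near-optimal representation of z
  have hSne : {rr : ℝ | ∃ (x : ℕ → X) (y : ℕ → Y),
      Summable (fun n => ‖x n‖ * ‖y n‖) ∧ HasSum (fun n => t (x n) (y n)) z ∧
      rr = ∑' n, ‖x n‖ * ‖y n‖}.Nonempty := by
    obtain ⟨x, y, hs, hh⟩ := h.exists_rep z
    exact ⟨_, x, y, hs, hh, rfl⟩
  obtain ⟨rr, hrS, hrlt⟩ := Real.lt_sInf_add_pos hSne hr4
  obtain ⟨x, y, hms, hh, rfl⟩ := hrS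
  rw [← h.norm_eq_sInf z] at hrlt
  have hm0 : ∀ n, (0:ℝ) ≤ ‖x n‖ * ‖y n‖ := fun n => by positivity
  -- Step 2: choose a cutoff with small tail
  have htail : Filter.Tendsto (fun N => ∑' i, (‖x (i+N)‖ * ‖y (i+N)‖))
      Filter.atTop (nhds 0) := tendsto_sum_nat_add (fun n => ‖x n‖ * ‖y n‖)
  obtain ⟨N, hN⟩ := (htail.eventually (eventually_lt_nhds hr4)).exists
  have hts : Summable (fun n => t (x n) (y n)) := by
    apply Summable.of_norm_bounded hms
    exact fun n => h.norm_tmul_le _ _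
  set z₀ := ∑ n ∈ Finset.range N, t (x n) (y n) with hz₀def
  have hzz₀ : ‖z - z₀‖ < r / 4 := by
    have hsplit : z₀ + ∑' i, t (x (i+N)) (y (i+N)) = ∑' n, t (x n) (y n) :=
      Summable.sum_add_tsum_nat_add N hts
    have h1 : z - z₀ = ∑' i, t (x (i+N)) (y (i+N)) := by
      rw [← hh.tsum_eq, ← hsplit]
      abel
    have hms' : Summable (fun i => ‖x (i+N)‖ * ‖y (i+N)‖) :=
      (summable_nat_add_iff N).mpr hms
    have hts' : Summable (fun i => ‖t (x (i+N)) (y (i+N))‖) :=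
      hms'.of_nonneg_of_le (fun i => norm_nonneg _) (fun i => h.norm_tmul_le _ _)
    calc ‖z - z₀‖ = ‖∑' i, t (x (i+N)) (y (i+N))‖ := by rw [h1]
      _ ≤ ∑' i, ‖t (x (i+N)) (y (i+N))‖ := norm_tsum_le_tsum_norm hts'
      _ ≤ ∑' i, (‖x (i+N)‖ * ‖y (i+N)‖) :=
          Summable.tsum_le_tsum (fun i => h.norm_tmul_le _ _) hts' hms'
      _ < r / 4 := hN
  -- Step 3: the metric π-property
  have hCm0 : (0:ℝ) ≤ ∑' n, ‖x n‖ * ‖y n‖ := tsum_nonneg hm0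
  set ε₂ := (r/4) / ((∑' n, ‖x n‖ * ‖y n‖) + 1) with hε₂def
  have hε₂ : 0 < ε₂ := by
    apply div_pos hr4
    linarith
  obtain ⟨P, hPidem, hPnorm, hPfd, hPapprox⟩ := hX ε₂ hε₂
    (((Finset.range N).filter (fun n => x n ≠ 0)).image (fun n => ‖x n‖⁻¹ • x n))
    (by
      intro u hu
      obtain ⟨n, hn, rfl⟩ := Finset.mem_image.mp hu
      exact norm_smul_inv_norm (Finset.mem_filter.mp hn).2)
  have hax : ∀ n : ℕ, ∃ aa : X, aa ∈ LinearMap.range (P : X →ₗ[ℝ] X) ∧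
      ((n < N ∧ x n ≠ 0) → ‖(‖x n‖⁻¹ • x n) - aa‖ < ε₂) ∧
      ((n < N ∧ x n ≠ 0) ∨ aa = 0) := by
    intro n
    by_cases hn : n < N ∧ x n ≠ 0
    · have hmem : (‖x n‖⁻¹ • x n) ∈
          ((Finset.range N).filter (fun n => x n ≠ 0)).image (fun n => ‖x n‖⁻¹ • x n) :=
        Finset.mem_image.mpr ⟨n, Finset.mem_filter.mpr ⟨Finset.mem_range.mpr hn.1, hn.2⟩, rfl⟩
      obtain ⟨aa, haP, ha⟩ := hPapprox _ hmem
      exact ⟨aa, haP, fun _ => ha, Or.inl hn⟩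
    · exact ⟨0, (LinearMap.range (P : X →ₗ[ℝ] X)).zero_mem, fun hk => absurd hk hn, Or.inr rfl⟩
  choose a haP haapprox hazero using hax
  have hPfix : ∀ u ∈ LinearMap.range (P : X →ₗ[ℝ] X), P u = u := by
    rintro u ⟨w0, rfl⟩
    have h0 := congrArg (fun (Q : X →L[ℝ] X) => Q w0) hPidem
    simpa [ContinuousLinearMap.mul_apply] using h0
  set z₁ := ∑ n ∈ Finset.range N, t (a n) (‖x n‖ • y n) with hz₁def
  have hlift : ∀ G : X →L[ℝ] Y →L[ℝ] ℝ, lift (G.comp P) z₁ = lift G z₁ := by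
    intro G'
    have e : ∀ G'' : X →L[ℝ] Y →L[ℝ] ℝ,
        lift G'' z₁ = ∑ n ∈ Finset.range N, G'' (a n) (‖x n‖ • y n) := by
      intro G''
      rw [hz₁def, map_sum]
      exact Finset.sum_congr rfl fun n _ => h.lift_tmul _ _ _
    rw [e, e]
    apply Finset.sum_congr rfl
    intro n _
    show G' (P (a n)) (‖x n‖ • y n) = G' (a n) (‖x n‖ • y n)
    rw [hPfix (a n) (haP n)]
  obtain ⟨w, hw, hwd⟩ := aux_core h P hPidem hPnorm hPfd hlift hr4
  -- distance from z₀ to z₁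
  have hz₀z₁ : ‖z₀ - z₁‖ ≤ r / 4 := by
    have hper : ∀ n ∈ Finset.range N,
        ‖t (x n) (y n) - t (a n) (‖x n‖ • y n)‖ ≤ ε₂ * (‖x n‖ * ‖y n‖) := by
      intro n hn
      by_cases hxn : x n = 0
      · have ha0 : a n = 0 := by
          rcases hazero n with hcond | h0
          · exact absurd hxn hcond.2
          · exact h0
        rw [hxn, ha0]
        simp
      · have hcond : n < N ∧ x n ≠ 0 := ⟨Finset.mem_range.mp hn, hxn⟩
        have happ := haapprox n hcond
        have hnx : 0 < ‖x n‖ := norm_pos_iff.mpr hxn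
        have hxr : ‖x n‖ • (‖x n‖⁻¹ • x n) = x n := by
          rw [smul_smul, mul_inv_cancel₀ hnx.ne', one_smul]
        have e1 : t (x n) (y n) = ‖x n‖ • t (‖x n‖⁻¹ • x n) (y n) := by
          calc t (x n) (y n) = t (‖x n‖ • (‖x n‖⁻¹ • x n)) (y n) := by rw [hxr]
            _ = ‖x n‖ • t (‖x n‖⁻¹ • x n) (y n) := by rw [aux_tsmul]
        have e2 : t (a n) (‖x n‖ • y n) = ‖x n‖ • t (a n) (y n) := map_smul _ _ _
        have e3 : t (‖x n‖⁻¹ • x n) (y n) - t (a n) (y n)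
            = t ((‖x n‖⁻¹ • x n) - a n) (y n) := by
          rw [map_sub, ContinuousLinearMap.sub_apply]
        rw [e1, e2, ← smul_sub, e3, norm_smul, Real.norm_eq_abs, abs_of_nonneg hnx.le]
        calc ‖x n‖ * ‖t ((‖x n‖⁻¹ • x n) - a n) (y n)‖
            ≤ ‖x n‖ * (‖(‖x n‖⁻¹ • x n) - a n‖ * ‖y n‖) :=
              mul_le_mul_of_nonneg_left (h.norm_tmul_le _ _) hnx.le
          _ ≤ ‖x n‖ * (ε₂ * ‖y n‖) := by
              apply mul_le_mul_of_nonneg_left _ hnx.le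
              exact mul_le_mul_of_nonneg_right happ.le (norm_nonneg _)
          _ = ε₂ * (‖x n‖ * ‖y n‖) := by ring
    have hsum1 : ‖z₀ - z₁‖ ≤ ∑ n ∈ Finset.range N, ε₂ * (‖x n‖ * ‖y n‖) := by
      rw [hz₀def, hz₁def, ← Finset.sum_sub_distrib]
      exact le_trans (norm_sum_le _ _) (Finset.sum_le_sum hper)
    have hsum2 : ∑ n ∈ Finset.range N, ε₂ * (‖x n‖ * ‖y n‖)
        = ε₂ * ∑ n ∈ Finset.range N, (‖x n‖ * ‖y n‖) := by
      rw [Finset.mul_sum]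
    have hsum3 : ∑ n ∈ Finset.range N, (‖x n‖ * ‖y n‖) ≤ ∑' n, ‖x n‖ * ‖y n‖ :=
      Summable.sum_le_tsum (Finset.range N) (fun i _ => hm0 i) hms
    have hsum4 : ε₂ * ((∑' n, ‖x n‖ * ‖y n‖) + 1) = r / 4 := by
      rw [hε₂def]
      field_simp
    have hsum5 : ε₂ * ∑ n ∈ Finset.range N, (‖x n‖ * ‖y n‖)
        ≤ ε₂ * ((∑' n, ‖x n‖ * ‖y n‖) + 1) := by
      apply mul_le_mul_of_nonneg_left _ hε₂.le
      linarith
    linarith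
  refine ⟨w, ?_, hw⟩
  rw [Metric.mem_ball]
  have h4 := dist_triangle4 w z₁ z₀ z
  have d1 : dist w z₁ = ‖z₁ - w‖ := by rw [dist_eq_norm, norm_sub_rev]
  have d2 : dist z₁ z₀ = ‖z₀ - z₁‖ := by rw [dist_eq_norm, norm_sub_rev]
  have d3 : dist z₀ z = ‖z - z₀‖ := by rw [dist_eq_norm, norm_sub_rev]
  rw [d1, d2, d3] at h4
  linarith
end
end

section
/- Let 1 ≤ p < ∞ and let μ be any measure. Then L_p(μ) has the metric π-property: for every ε > 0 and every finite set {f₁,…,fₙ} ⊆ S_{L_p(μ)} there exist finitely many pairwise disjoint measurable sets A₁,…,A_m of finite positive measure such that the conditional-expectation-type operator P(f) = ∑ⱼ (1/μ(Aⱼ)) (∫_{Aⱼ} f dμ) χ_{Aⱼ} is a norm-one projection onto the finite-dimensional subspace M = span{χ_{A₁},…,χ_{A_m}}, and each fᵢ is within ε of some element of M. -/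
noncomputable section

open scoped BigOperators ENNReal
open MeasureTheory

namespace LpPiAux

variable {α : Type*} [MeasurableSpace α] {μ : Measure α} {p : ℝ≥0∞}

lemma coeFn_sum' {ι : Type*} (s : Finset ι) (g : ι → Lp ℝ p μ) :
    (⇑(∑ j ∈ s, g j : Lp ℝ p μ)) =ᵐ[μ] fun x => ∑ j ∈ s, g j x := by
  classical
  induction s using Finset.cons_induction with
  | empty => simp only [Finset.sum_empty]; exact Lp.coeFn_zero ℝ p μ
  | cons a s ha ih =>
    rw [Finset.sum_cons]
    filter_upwards [Lp.coeFn_add (g a) (∑ j ∈ s, g j), ih] with x h1 h2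
    simp only [h1, Pi.add_apply, h2, Finset.sum_cons]

lemma combo_coeFn {m : ℕ} {A : Fin m → Set α} (hA : ∀ j, MeasurableSet (A j))
    (hμA : ∀ j, μ (A j) ≠ ∞) (c : Fin m → ℝ) :
    (⇑(∑ j, c j • indicatorConstLp p (hA j) (hμA j) (1 : ℝ) : Lp ℝ p μ))
      =ᵐ[μ] fun x => ∑ j, (A j).indicator (fun _ => c j) x := by
  have h1 : ∀ᵐ x ∂μ, ∀ j : Fin m,
      (c j • indicatorConstLp p (hA j) (hμA j) (1 : ℝ) : Lp ℝ p μ) x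
        = (A j).indicator (fun _ => c j) x := by
    rw [MeasureTheory.ae_all_iff]
    intro j
    filter_upwards [Lp.coeFn_smul (c j) (indicatorConstLp p (hA j) (hμA j) (1 : ℝ)),
      indicatorConstLp_coeFn (p := p) (hs := hA j) (hμs := hμA j) (c := (1:ℝ))] with x hx hx'
    rw [hx, Pi.smul_apply, hx']
    by_cases hxA : x ∈ A j <;> simp [Set.indicator, hxA]
  filter_upwards [coeFn_sum' Finset.univ
      (fun j => c j • indicatorConstLp p (hA j) (hμA j) (1 : ℝ)), h1] with x hx hx'
  rw [hx]
  exact Finset.sum_congr rfl fun j _ => hx' j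


lemma lintegral_combo {m : ℕ} {A : Fin m → Set α} (hA : ∀ j, MeasurableSet (A j))
    (hd : Pairwise (Function.onFun Disjoint A)) (c : Fin m → ℝ) {q : ℝ} (hq : 0 < q) :
    ∫⁻ x, (‖∑ j, (A j).indicator (fun _ => c j) x‖₊ : ℝ≥0∞) ^ q ∂μ
      = ∑ j, (‖c j‖₊ : ℝ≥0∞) ^ q * μ (A j) := by
  classical
  have hpt : ∀ x, (‖∑ j, (A j).indicator (fun _ => c j) x‖₊ : ℝ≥0∞) ^ q
      = ∑ j, (A j).indicator (fun _ => (‖c j‖₊ : ℝ≥0∞) ^ q) x := by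
    intro x
    by_cases hx : ∃ j, x ∈ A j
    · obtain ⟨j, hj⟩ := hx
      have hother : ∀ k, k ≠ j → x ∉ A k := fun k hk hxk =>
        Set.disjoint_left.mp (hd hk) hxk hj
      rw [Finset.sum_eq_single j, Finset.sum_eq_single j]
      · rw [Set.indicator_of_mem hj, Set.indicator_of_mem hj]
      · exact fun k _ hk => Set.indicator_of_notMem (hother k hk) _
      · exact fun h => absurd (Finset.mem_univ j) h
      · exact fun k _ hk => Set.indicator_of_notMem (hother k hk) _
      · exact fun h => absurd (Finset.mem_univ j) h
    · push_neg at hx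
      rw [Finset.sum_eq_zero fun k _ => Set.indicator_of_notMem (hx k) _,
        Finset.sum_eq_zero fun k _ => Set.indicator_of_notMem (hx k) _]
      simp [ENNReal.zero_rpow_of_pos hq]
  simp_rw [hpt]
  rw [lintegral_finset_sum _ fun j _ => measurable_const.indicator (hA j)]
  exact Finset.sum_congr rfl fun j _ => lintegral_indicator_const (hA j) _

lemma avg_pow_le (hp : Fact (1 ≤ p)) (hp' : p ≠ ∞) {A : Set α} (hA : MeasurableSet A)
    (h0 : μ A ≠ 0) (hT : μ A ≠ ∞) (g : Lp ℝ p μ) :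
    (‖((μ A).toReal⁻¹ * ∫ x in A, g x ∂μ)‖₊ : ℝ≥0∞) ^ p.toReal * μ A
      ≤ ∫⁻ x in A, (‖g x‖₊ : ℝ≥0∞) ^ p.toReal ∂μ := by
  have hp0 : p ≠ 0 := (zero_lt_one.trans_le hp.elim).ne'
  have hq : 0 < p.toReal := ENNReal.toReal_pos hp0 hp'
  set q : ℝ := p.toReal with hqdef
  set N : ℝ≥0∞ := eLpNorm (⇑g) p (μ.restrict A) with hN
  have hNlt : N < ∞ := ((Lp.memLp g).restrict A).eLpNorm_lt_top
  set I : ℝ≥0∞ := ∫⁻ x in A, (‖g x‖₊ : ℝ≥0∞) ∂μ with hI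
  have hI1 : I = eLpNorm (⇑g) 1 (μ.restrict A) := by
    rw [eLpNorm_one_eq_lintegral_enorm]; rfl
  have hq1 : 1 ≤ q := by
    have := ENNReal.toReal_mono hp' hp.elim
    simpa using this
  have hexp : (0:ℝ) ≤ 1 - 1/q := by
    have : 1/q ≤ 1 := by rw [div_le_one hq]; exact hq1
    linarith
  -- Hölder
  have hHolder : I ≤ N * μ A ^ (1 - 1/q) := by
    rw [hI1]
    have := eLpNorm_le_eLpNorm_mul_rpow_measure_univ (μ := μ.restrict A) (p := 1) (q := p)
      hp.elim ((Lp.aestronglyMeasurable g).restrict)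
    simpa [Measure.restrict_apply_univ, ENNReal.toReal_one] using this
  have hIlt : I < ∞ := lt_of_le_of_lt hHolder
    (ENNReal.mul_lt_top hNlt (ENNReal.rpow_ne_top_of_nonneg hexp hT).lt_top)
  -- bound the coefficient
  have hc : (‖((μ A).toReal⁻¹ * ∫ x in A, g x ∂μ)‖₊ : ℝ≥0∞) ≤ (μ A)⁻¹ * I := by
    have habs : |((μ A).toReal⁻¹ * ∫ x in A, g x ∂μ)| ≤ (μ A).toReal⁻¹ * I.toReal := by
      rw [abs_mul, abs_of_nonneg (by positivity : (0:ℝ) ≤ (μ A).toReal⁻¹)]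
      refine mul_le_mul_of_nonneg_left ?_ (by positivity)
      calc |∫ x in A, g x ∂μ| ≤ ∫ x in A, ‖g x‖ ∂μ := by
              simpa using norm_integral_le_integral_norm (μ := μ.restrict A) (f := ⇑g)
        _ = I.toReal := by
              rw [hI]
              rw [integral_norm_eq_lintegral_enorm ((Lp.aestronglyMeasurable g).restrict)]; rfl
    calc (‖((μ A).toReal⁻¹ * ∫ x in A, g x ∂μ)‖₊ : ℝ≥0∞)
        = ENNReal.ofReal |((μ A).toReal⁻¹ * ∫ x in A, g x ∂μ)| := by
          rw [← Real.norm_eq_abs, ofReal_norm]; rfl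
      _ ≤ ENNReal.ofReal ((μ A).toReal⁻¹ * I.toReal) := ENNReal.ofReal_le_ofReal habs
      _ = (μ A)⁻¹ * I := by
          rw [ENNReal.ofReal_mul (by positivity), ← ENNReal.toReal_inv,
            ENNReal.ofReal_toReal (by simp [h0]), ENNReal.ofReal_toReal hIlt.ne]
  -- combine
  have hNq : N ^ q = ∫⁻ x in A, (‖g x‖₊ : ℝ≥0∞) ^ q ∂μ := by
    rw [hN, eLpNorm_eq_lintegral_rpow_enorm_toReal hp0 hp', ← ENNReal.rpow_mul, one_div,
      inv_mul_cancel₀ hq.ne', ENNReal.rpow_one]; rfl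
  calc (‖((μ A).toReal⁻¹ * ∫ x in A, g x ∂μ)‖₊ : ℝ≥0∞) ^ q * μ A
      ≤ ((μ A)⁻¹ * (N * μ A ^ (1 - 1/q))) ^ q * μ A := by
        gcongr
        exact hc.trans (mul_le_mul_right hHolder _)
    _ = N ^ q * (((μ A) ^ q)⁻¹ * (μ A ^ (1 - 1/q)) ^ q * μ A) := by
        rw [ENNReal.mul_rpow_of_nonneg _ _ hq.le, ENNReal.mul_rpow_of_nonneg _ _ hq.le,
          ENNReal.inv_rpow]
        ring
    _ = N ^ q := by
        have hq0 : (μ A) ^ q ≠ 0 := by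
          simp only [ne_eq, ENNReal.rpow_eq_zero_iff, not_or, not_and]
          exact ⟨fun h => absurd h h0, fun h => absurd h hT⟩
        rw [← ENNReal.rpow_mul, sub_mul, one_mul, one_div, inv_mul_cancel₀ hq.ne',
          mul_assoc, ENNReal.rpow_sub _ _ h0 hT, ENNReal.rpow_one,
          ENNReal.div_mul_cancel h0 hT,
          ENNReal.inv_mul_cancel hq0 (ENNReal.rpow_ne_top_of_nonneg hq.le hT), mul_one]
    _ = ∫⁻ x in A, (‖g x‖₊ : ℝ≥0∞) ^ q ∂μ := hNq


lemma integrableOn_Lp (hp : Fact (1 ≤ p)) {A : Set α} (hT : μ A ≠ ∞) (g : Lp ℝ p μ) :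
    IntegrableOn (⇑g) A μ := by
  haveI : IsFiniteMeasure (μ.restrict A) :=
    ⟨by rw [Measure.restrict_apply_univ]; exact hT.lt_top⟩
  exact MemLp.integrable hp.elim ((Lp.memLp g).restrict A)

lemma norm_combo_le (hp : Fact (1 ≤ p)) (hp' : p ≠ ∞) {m : ℕ} {A : Fin m → Set α}
    (hA : ∀ j, MeasurableSet (A j)) (hμA : ∀ j, μ (A j) ≠ ∞)
    (hd : Pairwise (Function.onFun Disjoint A)) (hpos : ∀ j, μ (A j) ≠ 0)
    (g : Lp ℝ p μ) :
    ‖(∑ j, (((μ (A j)).toReal)⁻¹ * ∫ x in A j, g x ∂μ) •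
        indicatorConstLp p (hA j) (hμA j) (1:ℝ) : Lp ℝ p μ)‖ ≤ ‖g‖ := by
  have hp0 : p ≠ 0 := (zero_lt_one.trans_le hp.elim).ne'
  have hq : 0 < p.toReal := ENNReal.toReal_pos hp0 hp'
  rw [Lp.norm_def, Lp.norm_def]
  refine ENNReal.toReal_mono (Lp.eLpNorm_ne_top g) ?_
  rw [eLpNorm_congr_ae (combo_coeFn hA hμA _),
    eLpNorm_eq_lintegral_rpow_enorm_toReal hp0 hp', eLpNorm_eq_lintegral_rpow_enorm_toReal hp0 hp']
  refine ENNReal.rpow_le_rpow ?_ (by positivity)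
  refine (le_of_eq (lintegral_combo hA hd _ hq)).trans ?_
  calc ∑ j, (‖(((μ (A j)).toReal)⁻¹ * ∫ x in A j, g x ∂μ)‖₊ : ℝ≥0∞) ^ p.toReal * μ (A j)
      ≤ ∑ j, ∫⁻ x in A j, (‖g x‖₊ : ℝ≥0∞) ^ p.toReal ∂μ :=
        Finset.sum_le_sum fun j _ => avg_pow_le hp hp' (hA j) (hpos j) (hμA j) g
    _ = ∫⁻ x in ⋃ j, A j, (‖g x‖₊ : ℝ≥0∞) ^ p.toReal ∂μ := by
        rw [lintegral_iUnion hA hd, tsum_fintype]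
    _ ≤ ∫⁻ x, (‖g x‖₊ : ℝ≥0∞) ^ p.toReal ∂μ := lintegral_mono' Measure.restrict_le_self le_rfl

lemma setIntegral_ind (hp : Fact (1 ≤ p)) {m : ℕ} {A : Fin m → Set α}
    (hA : ∀ j, MeasurableSet (A j)) (hμA : ∀ j, μ (A j) ≠ ∞)
    (hd : Pairwise (Function.onFun Disjoint A)) (j k : Fin m) :
    ∫ x in A j, (indicatorConstLp p (hA k) (hμA k) (1:ℝ) : Lp ℝ p μ) x ∂μ
      = if k = j then (μ (A j)).toReal else 0 := by
  rw [setIntegral_indicatorConstLp (hA j) (hA k) (hμA k)]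
  split
  · next h => subst h; rw [Set.inter_self]; simp [Measure.real]
  · next h => rw [Set.disjoint_iff_inter_eq_empty.mp (hd h)]; simp

lemma setIntegral_combo (hp : Fact (1 ≤ p)) {m : ℕ} {A : Fin m → Set α}
    (hA : ∀ j, MeasurableSet (A j)) (hμA : ∀ j, μ (A j) ≠ ∞)
    (hd : Pairwise (Function.onFun Disjoint A)) (c : Fin m → ℝ) (j : Fin m) :
    ∫ x in A j, (∑ k, c k • indicatorConstLp p (hA k) (hμA k) (1:ℝ) : Lp ℝ p μ) x ∂μ
      = c j * (μ (A j)).toReal := by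
  classical
  rw [setIntegral_congr_ae (hA j) ((combo_coeFn hA hμA c).mono fun x hx _ => hx)]
  rw [integral_finset_sum (μ := μ.restrict (A j)) (f := fun k => (A k).indicator (fun _ => c k)) _ fun k _ => ((integrable_indicator_iff (hA k)).mpr
        (integrableOn_const (μ := μ) (hμA k))).integrableOn (s := A j)]
  rw [Finset.sum_eq_single j]
  · rw [setIntegral_indicator (hA j), Set.inter_self, setIntegral_const, smul_eq_mul, mul_comm]; rfl
  · intro k _ hk
    rw [setIntegral_indicator (hA k),
      Set.disjoint_iff_inter_eq_empty.mp (hd (fun h => hk (h ▸ rfl)) : Disjoint (A j) (A k))]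
    simp
  · exact fun h => absurd (Finset.mem_univ j) h


lemma exists_P (hp : Fact (1 ≤ p)) (hp' : p ≠ ∞) {m : ℕ} (hm : 0 < m) {A : Fin m → Set α}
    (hA : ∀ j, MeasurableSet (A j)) (hμA : ∀ j, μ (A j) ≠ ∞)
    (hd : Pairwise (Function.onFun Disjoint A)) (hpos : ∀ j, 0 < μ (A j)) :
    ∃ P : Lp ℝ p μ →L[ℝ] Lp ℝ p μ,
      (∀ g : Lp ℝ p μ, P g = ∑ j, (((μ (A j)).toReal)⁻¹ * ∫ x in A j, g x ∂μ) •
          indicatorConstLp p (hA j) (hμA j) (1 : ℝ)) ∧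
      IsIdempotentElem P ∧ ‖P‖ = 1 ∧
      LinearMap.range (P : Lp ℝ p μ →ₗ[ℝ] Lp ℝ p μ) =
        Submodule.span ℝ (Set.range fun j => indicatorConstLp p (hA j) (hμA j) (1 : ℝ)) := by
  classical
  have hp0 : p ≠ 0 := (zero_lt_one.trans_le hp.elim).ne'
  have hpos' : ∀ j, μ (A j) ≠ 0 := fun j => (hpos j).ne'
  have htR : ∀ j, (μ (A j)).toReal ≠ 0 :=
    fun j => (ENNReal.toReal_pos (hpos' j) (hμA j)).ne'
  set e : Fin m → Lp ℝ p μ := fun j => indicatorConstLp p (hA j) (hμA j) (1 : ℝ) with he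
  set c : Lp ℝ p μ → Fin m → ℝ :=
    fun g j => ((μ (A j)).toReal)⁻¹ * ∫ x in A j, g x ∂μ with hc
  set L : Lp ℝ p μ →ₗ[ℝ] Lp ℝ p μ :=
    { toFun := fun g => ∑ j, c g j • e j
      map_add' := fun g h => by
        rw [← Finset.sum_add_distrib]
        refine Finset.sum_congr rfl fun j _ => ?_
        rw [← add_smul]
        congr 1
        simp only [hc]
        rw [setIntegral_congr_ae (hA j) ((Lp.coeFn_add g h).mono fun x hx _ => hx)]
        simp only [Pi.add_apply]
        rw [integral_add (integrableOn_Lp hp (hμA j) g) (integrableOn_Lp hp (hμA j) h)]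
        ring
      map_smul' := fun r g => by
        simp only [RingHom.id_apply]
        rw [Finset.smul_sum]
        refine Finset.sum_congr rfl fun j _ => ?_
        rw [smul_smul]
        congr 1
        simp only [hc]
        rw [setIntegral_congr_ae (hA j) ((Lp.coeFn_smul r g).mono fun x hx _ => hx)]
        simp only [Pi.smul_apply]
        rw [integral_smul]
        simp only [smul_eq_mul]
        ring } with hL
  have hLbound : ∀ g, ‖L g‖ ≤ 1 * ‖g‖ := fun g => by
    rw [one_mul]; exact norm_combo_le hp hp' hA hμA hd hpos' g
  set P : Lp ℝ p μ →L[ℝ] Lp ℝ p μ := L.mkContinuous 1 hLbound with hP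
  have hPapp : ∀ g, P g = ∑ j, c g j • e j := fun g => rfl
  -- P fixes each e k
  have hPe : ∀ k, P (e k) = e k := by
    intro k
    rw [hPapp]
    have hck : ∀ j, c (e k) j = if k = j then 1 else 0 := by
      intro j
      simp only [hc]
      rw [setIntegral_ind hp hA hμA hd j k]
      split
      · exact inv_mul_cancel₀ (htR j)
      · exact mul_zero _
    rw [Finset.sum_congr rfl fun j _ => by rw [hck j]]
    simp [Finset.sum_ite_eq]
  -- coefficients of P g equal coefficients of g
  have hcP : ∀ g j, c (P g) j = c g j := by
    intro g j
    simp only [hc]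
    rw [hPapp, setIntegral_combo hp hA hμA hd _ j]
    rw [mul_comm (c g j) _, ← mul_assoc, inv_mul_cancel₀ (htR j), one_mul]
  have hPP : ∀ g, P (P g) = P g := by
    intro g
    conv_lhs => rw [hPapp (P g)]
    conv_rhs => rw [hPapp g]
    exact Finset.sum_congr rfl fun j _ => by rw [hcP g j]
  refine ⟨P, hPapp, ?_, ?_, ?_⟩
  · -- idempotent
    ext g : 1
    rw [ContinuousLinearMap.mul_apply]
    exact hPP g
  · -- norm one
    refine le_antisymm (P.opNorm_le_bound zero_le_one hLbound) ?_
    have j0 : Fin m := ⟨0, hm⟩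
    have hn0 : 0 < ‖e j0‖ := by
      rw [he]
      rw [norm_indicatorConstLp hp0 hp']
      simp only [norm_one, one_mul]
      exact Real.rpow_pos_of_pos (ENNReal.toReal_pos (hpos' j0) (hμA j0)) _
    have := P.le_opNorm (e j0)
    rw [hPe j0] at this
    exact (le_mul_iff_one_le_left hn0).mp this
  · -- range
    apply le_antisymm
    · rintro x ⟨g, rfl⟩
      rw [ContinuousLinearMap.coe_coe, hPapp]
      exact Submodule.sum_mem _ fun j _ =>
        Submodule.smul_mem _ _ (Submodule.subset_span ⟨j, rfl⟩)
    · rw [Submodule.span_le]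
      rintro x ⟨k, rfl⟩
      exact ⟨e k, hPe k⟩


end LpPiAux

open LpPiAux

/-- For `1 ≤ p < ∞` and any measure `μ`, the space `L_p(μ)` has the metric
π-property, witnessed explicitly: for every `ε > 0` and unit vectors `f₁, …, fₙ` there are
finitely many pairwise disjoint measurable sets `A₁, …, A_m` of finite positive measure such
that the conditional-expectation-type operator
`P(f) = ∑ⱼ (1/μ(Aⱼ)) (∫_{Aⱼ} f dμ) χ_{Aⱼ}` is a norm-one projection onto the
finite dimensional subspace `M = span {χ_{A₁}, …, χ_{A_m}}`, and each `fᵢ` is within `ε`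
of some element of `M`. -/
theorem Lp_metricPiProperty
    {α : Type*} [MeasurableSpace α] (μ : Measure α)
    (p : ℝ≥0∞) [hp : Fact (1 ≤ p)] (hp' : p ≠ ∞)
    (ε : ℝ) (hε : 0 < ε) (n : ℕ) (hn : 0 < n)
    (f : Fin n → Lp ℝ p μ) (hf : ∀ i, ‖f i‖ = 1) :
    ∃ (m : ℕ) (_ : 0 < m) (A : Fin m → Set α) (hA : ∀ j, MeasurableSet (A j))
      (hμA : ∀ j, μ (A j) ≠ ∞),
      Pairwise (Function.onFun Disjoint A) ∧
      (∀ j, 0 < μ (A j)) ∧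
      ∃ P : Lp ℝ p μ →L[ℝ] Lp ℝ p μ,
        (∀ g : Lp ℝ p μ, P g = ∑ j, (((μ (A j)).toReal)⁻¹ * ∫ x in A j, g x ∂μ) •
            indicatorConstLp p (hA j) (hμA j) (1 : ℝ)) ∧
        IsIdempotentElem P ∧ ‖P‖ = 1 ∧
        LinearMap.range (P : Lp ℝ p μ →ₗ[ℝ] Lp ℝ p μ) =
          Submodule.span ℝ (Set.range fun j => indicatorConstLp p (hA j) (hμA j) (1 : ℝ)) ∧
        ∀ i, ∃ g ∈ Submodule.span ℝ
            (Set.range fun j => indicatorConstLp p (hA j) (hμA j) (1 : ℝ)),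
          ‖f i - g‖ < ε := by
  classical
  have hp0 : p ≠ 0 := (zero_lt_one.trans_le hp.elim).ne'
  -- choose a smaller ε'
  set ε' : ℝ := min ε 1 / 2 with hε'def
  have hε'0 : 0 < ε' := by
    have := lt_min hε one_pos
    positivity
  have hε'ε : ε' < ε := by
    have h1 : min ε 1 ≤ ε := min_le_left _ _
    rw [hε'def]; linarith
  have hε'1 : ε' < 1 := by
    have h1 : min ε 1 ≤ 1 := min_le_right _ _
    rw [hε'def]; linarith
  -- approximate by simple functions
  have hdense := Lp.simpleFunc.denseRange (E := ℝ) (μ := μ) (p := p) hp'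
  choose s hs using fun i => hdense.exists_dist_lt (f i) hε'0
  set S : Fin n → SimpleFunc α ℝ := fun i => Lp.simpleFunc.toSimpleFunc (s i) with hSdef
  have hS : ∀ i, (⇑(S i)) =ᵐ[μ] ⇑((s i : Lp ℝ p μ)) :=
    fun i => Lp.simpleFunc.toSimpleFunc_eq_toFun (s i)
  have hSmem : ∀ i, MemLp (⇑(S i)) p μ := fun i => Lp.simpleFunc.memLp (s i)
  -- the partition
  set B : (Fin n → ℝ) → Set α := fun v => {x | ∀ i, S i x = v i} with hBdef
  have hBmeas : ∀ v, MeasurableSet (B v) := by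
    intro v
    have : B v = ⋂ i, (S i) ⁻¹' {v i} := by
      ext x; simp [hBdef, Set.mem_iInter]
    rw [this]
    exact MeasurableSet.iInter fun i => (S i).measurableSet_fiber (v i)
  have hBuniq : ∀ {x v w}, x ∈ B v → x ∈ B w → v = w := by
    intro x v w hv hw
    funext i
    exact (hv i).symm.trans (hw i)
  set F : Finset (Fin n → ℝ) := Fintype.piFinset fun i => (S i).range with hFdef
  set sel : Finset (Fin n → ℝ) := F.filter fun v => v ≠ 0 ∧ μ (B v) ≠ 0 with hseldef
  -- a.e. the pattern is zero or selected
  have hae : ∀ᵐ x ∂μ, (fun i => S i x) = 0 ∨ (fun i => S i x) ∈ sel := by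
    have hN : μ (⋃ v ∈ (F.filter fun v => μ (B v) = 0), B v) = 0 := by
      refine (measure_biUnion_null_iff (Finset.countable_toSet _)).mpr fun v hv => ?_
      exact (Finset.mem_filter.mp hv).2
    rw [MeasureTheory.ae_iff]
    refine measure_mono_null ?_ hN
    intro x hx
    simp only [Set.mem_setOf_eq, not_or] at hx
    obtain ⟨hx0, hxsel⟩ := hx
    have hxF : (fun i => S i x) ∈ F := by
      rw [hFdef, Fintype.mem_piFinset]
      exact fun i => (S i).mem_range_self x
    have hxB : x ∈ B (fun i => S i x) := fun i => rfl
    have hμ0 : μ (B (fun i => S i x)) = 0 := by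
      by_contra hne
      exact hxsel (Finset.mem_filter.mpr ⟨hxF, hx0, hne⟩)
    exact Set.mem_biUnion (Finset.mem_filter.mpr ⟨hxF, hμ0⟩) hxB
  -- sel is nonempty
  have hsel_ne : sel.Nonempty := by
    rw [Finset.nonempty_iff_ne_empty]
    intro hemp
    have hz : (⇑(S ⟨0, hn⟩)) =ᵐ[μ] 0 := by
      filter_upwards [hae] with x hx
      rcases hx with h0 | hsel'
      · exact congrFun h0 _
      · rw [hemp] at hsel'; exact absurd hsel' (Finset.notMem_empty _)
    have h0 : (s ⟨0, hn⟩ : Lp ℝ p μ) = 0 := by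
      apply Lp.ext
      filter_upwards [hS ⟨0, hn⟩, hz, Lp.coeFn_zero ℝ p μ] with x h1 h2 h3
      rw [← h1, h2, h3]
    have hlt : ‖f ⟨0, hn⟩‖ < 1 := by
      have := hs ⟨0, hn⟩
      rw [dist_eq_norm, h0, sub_zero] at this
      exact this.trans hε'1
    rw [hf ⟨0, hn⟩] at hlt
    exact lt_irrefl _ hlt
  set m : ℕ := sel.card with hmdef
  have hm : 0 < m := Finset.card_pos.mpr hsel_ne
  set eq : { x // x ∈ sel } ≃ Fin m := sel.equivFin with heqdef
  set A : Fin m → Set α := fun j => B ((eq.symm j : { x // x ∈ sel }) : Fin n → ℝ) with hAdef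
  have hA : ∀ j, MeasurableSet (A j) := fun j => hBmeas _
  have hselmem : ∀ j : Fin m, ((eq.symm j : { x // x ∈ sel }) : Fin n → ℝ) ∈ sel :=
    fun j => (eq.symm j).2
  have hselspec : ∀ {v : Fin n → ℝ}, v ∈ sel → v ∈ F ∧ v ≠ 0 ∧ μ (B v) ≠ 0 :=
    fun hv => Finset.mem_filter.mp hv |>.imp id id
  have hμA : ∀ j, μ (A j) ≠ ∞ := by
    intro j
    obtain ⟨hvF, hv0, -⟩ := hselspec (hselmem j)
    obtain ⟨i, hi⟩ := Function.ne_iff.mp hv0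
    have hsub : A j ⊆ (S i) ⁻¹' {((eq.symm j : { x // x ∈ sel }) : Fin n → ℝ) i} :=
      fun x hx => hx i
    exact ((measure_mono hsub).trans_lt
      (SimpleFunc.measure_preimage_lt_top_of_memLp hp0 hp' (S i) (hSmem i) _ hi)).ne
  have hpos : ∀ j, 0 < μ (A j) := by
    intro j
    obtain ⟨-, -, h⟩ := hselspec (hselmem j)
    exact pos_iff_ne_zero.mpr h
  have hd : Pairwise (Function.onFun Disjoint A) := by
    intro j k hjk
    refine Set.disjoint_left.mpr fun x hxj hxk => hjk ?_
    have : (eq.symm j : { x // x ∈ sel }) = (eq.symm k : { x // x ∈ sel }) :=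
      Subtype.ext (hBuniq hxj hxk)
    simpa using congrArg eq (this)
  -- the representation of each simple function
  have hrep : ∀ i, (⇑(S i)) =ᵐ[μ]
      fun x => ∑ j : Fin m, (A j).indicator
        (fun _ => ((eq.symm j : { x // x ∈ sel }) : Fin n → ℝ) i) x := by
    intro i
    filter_upwards [hae] with x hx
    rcases hx with h0 | hsel'
    · have hxB0 : x ∈ B 0 := fun i' => congrFun h0 i'
      have hnot : ∀ j, x ∉ A j := by
        intro j hj
        obtain ⟨-, hv0, -⟩ := hselspec (hselmem j)
        exact hv0 (hBuniq hj hxB0)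
      rw [Finset.sum_eq_zero fun j _ => Set.indicator_of_notMem (hnot j) _]
      exact congrFun h0 i
    · set j0 : Fin m := eq ⟨_, hsel'⟩ with hj0
      have hsymm : eq.symm j0 = ⟨fun i' => S i' x, hsel'⟩ := by
        rw [hj0, Equiv.symm_apply_apply]
      have hAj0 : A j0 = B (fun i' => S i' x) := by
        show B ((eq.symm j0 : { x // x ∈ sel }) : Fin n → ℝ) = _
        rw [hsymm]
      have hxj0 : x ∈ A j0 := by rw [hAj0]; exact fun i' => rfl
      rw [Finset.sum_eq_single j0]
      · rw [Set.indicator_of_mem hxj0]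
        have hval : ((eq.symm j0 : { x // x ∈ sel }) : Fin n → ℝ) = fun i' => S i' x := by
          rw [hsymm]
        rw [hval]
      · intro k _ hk
        refine Set.indicator_of_notMem (fun hxk => hk ?_) _
        have : (eq.symm k : { x // x ∈ sel }) = ⟨_, hsel'⟩ :=
          Subtype.ext (hBuniq hxk (fun i' => rfl))
        rw [hj0, ← this, Equiv.apply_symm_apply]
      · exact fun h => absurd (Finset.mem_univ j0) h
  -- Lp-level representation
  have hrepLp : ∀ i, (s i : Lp ℝ p μ) =
      ∑ j : Fin m, (((eq.symm j : { x // x ∈ sel }) : Fin n → ℝ) i) •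
        indicatorConstLp p (hA j) (hμA j) (1 : ℝ) := by
    intro i
    apply Lp.ext
    filter_upwards [hS i, hrep i,
      combo_coeFn hA hμA (fun j => ((eq.symm j : { x // x ∈ sel }) : Fin n → ℝ) i)]
      with x h1 h2 h3
    rw [h3, ← h2, ← h1]
  obtain ⟨P, hPapp, hPidem, hPnorm, hPrange⟩ := exists_P hp hp' hm hA hμA hd hpos
  refine ⟨m, hm, A, hA, hμA, hd, hpos, P, hPapp, hPidem, hPnorm, hPrange, fun i => ?_⟩
  refine ⟨(s i : Lp ℝ p μ), ?_, ?_⟩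
  · rw [hrepLp i]
    exact Submodule.sum_mem _ fun j _ =>
      Submodule.smul_mem _ _ (Submodule.subset_span ⟨j, rfl⟩)
  · rw [← dist_eq_norm]
    exact (hs i).trans hε'ε
end
end
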